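/- For a fixed x in (0, π/2), the function t ↦ sin(x/t)^t is decreasing on (1, ∞). -/
import Mathlib

theorem stmt_10 (x : ℝ) (hx : x ∈ Set.Ioo 0 (Real.pi / 2)) :
    StrictAntiOn (fun t : ℝ => Real.sin (x / t) ^ t) (Set.Ioi 1) := by
  obtain ⟨hx0, hx2⟩ := hx
  intro s hs t ht hst
  simp only [Set.mem_Ioi] at hs ht
  have hs0 : (0:ℝ) < s := lt_trans one_pos hs
  have ht0 : (0:ℝ) < t := lt_trans one_pos ht
  have hxt0 : 0 < x / t := div_pos hx0 ht0
  have hxs0 : 0 < x / s := div_pos hx0 hs0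
  have hts : x / t < x / s := div_lt_div_of_pos_left hx0 hs0 hst
  have hxs2 : x / s < Real.pi / 2 := lt_trans (by
    calc x / s < x / 1 := div_lt_div_of_pos_left hx0 one_pos hs
    _ = x := by ring) hx2
  have hxt2 : x / t < Real.pi / 2 := lt_trans hts hxs2
  have ha0 : 0 < Real.sin (x / t) := Real.sin_pos_of_pos_of_lt_pi hxt0
    (lt_trans hxt2 (by linarith [Real.pi_pos]))
  have ha1 : Real.sin (x / t) < 1 := by
    have := Real.strictMonoOn_sin (a := x / t) (b := Real.pi / 2)
      ⟨by linarith, le_of_lt hxt2⟩ ⟨by linarith [Real.pi_pos], le_refl _⟩ hxt2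
    simpa [Real.sin_pi_div_two] using this
  have hab : Real.sin (x / t) < Real.sin (x / s) :=
    Real.strictMonoOn_sin ⟨by linarith, le_of_lt hxt2⟩
      ⟨by linarith, le_of_lt hxs2⟩ hts
  calc Real.sin (x / t) ^ t < Real.sin (x / t) ^ s :=
        Real.rpow_lt_rpow_of_exponent_gt ha0 ha1 hst
    _ < Real.sin (x / s) ^ s := Real.rpow_lt_rpow (le_of_lt ha0) hab hs0
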